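/- arXiv:2404.02812 — 3 statements merged into one kernel-verified Lean document; each statement's English description precedes it below -/
import Mathlib

section
/- Let δ > 0, C' > 0 and E > 0 be real numbers. Let φ : ℝ → ℝ be a function with nonnegative values that is non-increasing on [0,∞), satisfies φ(s) ≤ E/s for every real s > 0, and satisfies the functional inequality r·φ(s+r) ≤ C'·φ(s)^{1+δ} for all real s ≥ 0 and all real r ≥ 0. Then φ(s) = 0 for every real s ≥ E·(2·C')^{1/δ} + 1/(1 − 2^{−δ}). -/
open Real

/-- De Giorgi-type iteration lemma: if `φ : ℝ → [0,∞)` is non-increasing on `[0,∞)`,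
decays like `E/s`, and satisfies the functional inequality
`r * φ (s + r) ≤ C' * φ s ^ (1 + δ)`, then `φ` vanishes for
`s ≥ E * (2 * C') ^ (1/δ) + 1 / (1 - 2 ^ (-δ))`. -/
theorem deGiorgi_iteration
    (δ C' E : ℝ) (hδ : 0 < δ) (hC' : 0 < C') (hE : 0 < E)
    (φ : ℝ → ℝ)
    (hφ_nonneg : ∀ s, 0 ≤ φ s)
    (hφ_mono : AntitoneOn φ (Set.Ici (0 : ℝ)))
    (hφ_decay : ∀ s : ℝ, 0 < s → φ s ≤ E / s)
    (hfunc : ∀ s : ℝ, 0 ≤ s → ∀ r : ℝ, 0 ≤ r → r * φ (s + r) ≤ C' * φ s ^ (1 + δ)) :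
    ∀ s : ℝ, E * (2 * C') ^ (1 / δ) + 1 / (1 - 2 ^ (-δ)) ≤ s → φ s = 0 := by
  intro s hs
  set a : ℝ := 2 * C' with ha_def
  have ha : (0:ℝ) < a := by positivity
  set M : ℝ := a ^ (-(1/δ)) with hM_def
  have hM0 : 0 < M := rpow_pos_of_pos ha _
  set q : ℝ := (2:ℝ) ^ (-δ) with hq_def
  have hq0 : (0:ℝ) < q := rpow_pos_of_pos two_pos _
  have hq1 : q < 1 := rpow_lt_one_of_one_lt_of_neg one_lt_two (neg_neg_of_pos hδ)
  set s₀ : ℝ := E * a ^ (1/δ) with hs0_def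
  have hs₀ : 0 < s₀ := by positivity
  set σ : ℕ → ℝ := fun n => s₀ + ∑ k ∈ Finset.range n, q ^ k with hσ_def
  have hσ_succ : ∀ n, σ (n + 1) = σ n + q ^ n := by
    intro n
    simp [hσ_def, Finset.sum_range_succ, add_assoc]
  have hσ_pos : ∀ n, 0 < σ n := by
    intro n
    have : 0 ≤ ∑ k ∈ Finset.range n, q ^ k :=
      Finset.sum_nonneg fun k _ => pow_nonneg hq0.le k
    have := hs₀
    simp only [hσ_def]
    linarith
  have hσ_le : ∀ n, σ n ≤ s := by
    intro n
    have hgeo : ∑ k ∈ Finset.range n, q ^ k ≤ 1 / (1 - q) := by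
      have h0 := geom_sum_Ico_le_of_lt_one hq0.le hq1 (m := 0) (n := n)
      rw [pow_zero] at h0
      rw [Finset.range_eq_Ico]
      exact h0
    have : σ n ≤ s₀ + 1 / (1 - q) := by
      simp only [hσ_def]; linarith
    exact this.trans hs
  -- powers of 1/2 vs rpow
  have hhalf : ∀ n : ℕ, ((1:ℝ)/2) ^ n = (2:ℝ) ^ (-(n:ℝ)) := by
    intro n
    rw [rpow_neg (by norm_num : (0:ℝ) ≤ 2), rpow_natCast, one_div, inv_pow]
  have hqn : ∀ n : ℕ, q ^ n = (2:ℝ) ^ (-δ * n) := by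
    intro n
    rw [hq_def, ← rpow_natCast ((2:ℝ) ^ (-δ)) n, ← rpow_mul (by norm_num : (0:ℝ) ≤ 2)]
  -- the key iteration bound
  have hiter : ∀ n : ℕ, φ (σ n) ≤ M * (1/2) ^ n := by
    intro n
    induction n with
    | zero =>
        have h1 : φ s₀ ≤ E / s₀ := hφ_decay s₀ hs₀
        have h2 : E / s₀ = M := by
          rw [hs0_def, hM_def, rpow_neg ha.le]
          have hpow : (0:ℝ) < a ^ (1/δ) := rpow_pos_of_pos ha _
          field_simp
        have h3 : σ 0 = s₀ := by simp [hσ_def]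
        simpa [h3, h2] using h1
    | succ n ih =>
        have hq_pow : (0:ℝ) < q ^ n := pow_pos hq0 n
        have key := hfunc (σ n) (hσ_pos n).le (q ^ n) hq_pow.le
        rw [← hσ_succ n] at key
        have hrpow : φ (σ n) ^ (1 + δ) ≤ (M * (1/2) ^ n) ^ (1 + δ) :=
          rpow_le_rpow (hφ_nonneg _) ih (by positivity)
        have heq : C' * (M * (1/2) ^ n) ^ (1 + δ) = q ^ n * (M * (1/2) ^ (n+1)) := by
          rw [mul_rpow hM0.le (by positivity), hM_def,
            ← rpow_mul ha.le, hhalf n, ← rpow_mul (by norm_num : (0:ℝ) ≤ 2),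
            hqn n, hhalf (n+1)]
          have e1 : -(1/δ) * (1 + δ) = -(1/δ) + (-1) := by
            field_simp; ring
          have e2 : -(n:ℝ) * (1 + δ) = (-δ * n) + (-((n:ℝ)+1)) + 1 := by ring
          rw [e1, e2, rpow_add ha, rpow_add two_pos, rpow_add two_pos,
            rpow_neg_one, rpow_one]
          have : ((n:ℕ)+1 : ℝ) = ((n+1 : ℕ) : ℝ) := by push_cast; ring
          rw [show (-(((n:ℝ))+1)) = (-(((n+1:ℕ)):ℝ)) by push_cast; ring]
          rw [ha_def]
          field_simp
        have : q ^ n * φ (σ (n+1)) ≤ q ^ n * (M * (1/2) ^ (n+1)) := by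
          calc q ^ n * φ (σ (n+1)) ≤ C' * φ (σ n) ^ (1 + δ) := key
            _ ≤ C' * (M * (1/2) ^ n) ^ (1 + δ) := by
                exact mul_le_mul_of_nonneg_left hrpow hC'.le
            _ = q ^ n * (M * (1/2) ^ (n+1)) := heq
        exact le_of_mul_le_mul_left this hq_pow
  -- φ s ≤ M * (1/2)^n for all n
  have hbound : ∀ n : ℕ, φ s ≤ M * (1/2) ^ n := by
    intro n
    have h1 : φ s ≤ φ (σ n) :=
      hφ_mono (Set.mem_Ici.mpr (hσ_pos n).le)
        (Set.mem_Ici.mpr ((hσ_pos 0).le.trans (hσ_le 0))) (hσ_le n)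
    exact h1.trans (hiter n)
  have htend : Filter.Tendsto (fun n : ℕ => M * (1/2:ℝ) ^ n) Filter.atTop (nhds 0) := by
    have := tendsto_pow_atTop_nhds_zero_of_lt_one (by norm_num : (0:ℝ) ≤ 1/2)
      (by norm_num : (1/2:ℝ) < 1)
    simpa using this.const_mul M
  have hle : φ s ≤ 0 := ge_of_tendsto' htend hbound
  exact le_antisymm hle (hφ_nonneg s)
end

section
/- Let δ > 0 and C' > 0 be real numbers and let φ : ℝ → ℝ be a function with nonnegative values satisfying the functional inequality r·φ(s+r) ≤ C'·φ(s)^{1+δ} for all real s ≥ 0 and all real r ≥ 0. Let s₀ ≥ 0 be a real number with φ(s₀)^δ ≤ 1/(2·C'). Then for every natural number m one has φ(s₀ + Σ_{i=0}^{m} 2^{−i·δ}) ≤ C'^{−1/δ} · 2^{−m−1−1/δ}. -/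
open Real Finset

private lemma key_id (δ C' t : ℝ) (hδ : 0 < δ) (hC' : 0 < C') :
    C' * (C' ^ (-(1/δ)) * (2:ℝ) ^ (-t)) ^ (1+δ) =
      C' ^ (-(1/δ)) * (2:ℝ) ^ (-t * (1+δ)) := by
  rw [Real.mul_rpow (Real.rpow_nonneg hC'.le _) (Real.rpow_nonneg (by norm_num) _),
    ← Real.rpow_mul hC'.le, ← Real.rpow_mul (by norm_num : (0:ℝ) ≤ 2)]
  nth_rewrite 1 [← Real.rpow_one C']
  rw [← mul_assoc, ← Real.rpow_add hC']
  have h1 : 1 + -(1/δ) * (1+δ) = -(1/δ) := by field_simp; ring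
  have h2 : -t * (1+δ) = -(t * (1+δ)) := by ring
  rw [h1, h2]

/-- The inductive claim of the De Giorgi-type iteration: if `φ : ℝ → [0,∞)` satisfies
`r * φ (s + r) ≤ C' * φ s ^ (1 + δ)` and `φ s₀ ^ δ ≤ 1 / (2 * C')`, then for every `m`,
`φ (s₀ + ∑_{i=0}^m 2 ^ (-i * δ)) ≤ C' ^ (-1/δ) * 2 ^ (-m - 1 - 1/δ)`. -/
theorem deGiorgi_claim
    (δ C' : ℝ) (hδ : 0 < δ) (hC' : 0 < C')
    (φ : ℝ → ℝ)
    (hφ_nonneg : ∀ s, 0 ≤ φ s)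
    (hfunc : ∀ s : ℝ, 0 ≤ s → ∀ r : ℝ, 0 ≤ r → r * φ (s + r) ≤ C' * φ s ^ (1 + δ))
    (s₀ : ℝ) (hs₀ : 0 ≤ s₀)
    (hstart : φ s₀ ^ δ ≤ 1 / (2 * C')) :
    ∀ m : ℕ,
      φ (s₀ + ∑ i ∈ Finset.range (m + 1), (2 : ℝ) ^ (-(i : ℝ) * δ)) ≤
        C' ^ (-(1 / δ)) * 2 ^ (-(m : ℝ) - 1 - 1 / δ) := by
  have hδ' : δ ≠ 0 := hδ.ne'
  -- initial bound φ s₀ ≤ C'^{-1/δ} 2^{-1/δ}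
  have hinit : φ s₀ ≤ C' ^ (-(1/δ)) * (2:ℝ) ^ (-(1/δ)) := by
    have h1 : (φ s₀ ^ δ) ^ (1/δ) ≤ ((1 : ℝ)/(2*C')) ^ (1/δ) :=
      Real.rpow_le_rpow (Real.rpow_nonneg (hφ_nonneg _) _) hstart (by positivity)
    rw [← Real.rpow_mul (hφ_nonneg _), mul_one_div_cancel hδ', Real.rpow_one] at h1
    calc φ s₀ ≤ ((1:ℝ)/(2*C')) ^ (1/δ) := h1
      _ = C' ^ (-(1/δ)) * (2:ℝ) ^ (-(1/δ)) := by
          rw [one_div, ← Real.rpow_neg_one (2*C'), ← Real.rpow_mul (by positivity),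
            Real.mul_rpow (by norm_num) hC'.le, neg_one_mul, mul_comm]
  intro m
  induction m with
  | zero =>
    have hsum : (∑ i ∈ Finset.range 1, (2:ℝ) ^ (-(i:ℝ) * δ)) = 1 := by
      simp
    rw [hsum]
    have h := hfunc s₀ hs₀ 1 zero_le_one
    rw [one_mul] at h
    have h2 : φ (s₀ + 1) ≤ C' * (C' ^ (-(1/δ)) * (2:ℝ) ^ (-(1/δ))) ^ (1+δ) :=
      h.trans (mul_le_mul_of_nonneg_left
        (Real.rpow_le_rpow (hφ_nonneg _) hinit (by positivity)) hC'.le)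
    rw [key_id δ C' (1/δ) hδ hC'] at h2
    have he : -(1/δ) * (1+δ) = -(0:ℝ) - 1 - 1/δ := by field_simp; ring
    rw [he] at h2
    simpa using h2
  | succ m ih =>
    set S := s₀ + ∑ i ∈ Finset.range (m + 1), (2:ℝ) ^ (-(i:ℝ) * δ) with hS
    have hSnn : 0 ≤ S := by
      apply add_nonneg hs₀
      apply Finset.sum_nonneg
      intro i _
      positivity
    have hr : (0:ℝ) < (2:ℝ) ^ (-((m:ℝ)+1) * δ) := Real.rpow_pos_of_pos (by norm_num) _
    have hsum : s₀ + ∑ i ∈ Finset.range (m + 2), (2:ℝ) ^ (-(i:ℝ) * δ)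
        = S + (2:ℝ) ^ (-((m:ℝ)+1) * δ) := by
      rw [Finset.sum_range_succ, hS]
      push_cast
      ring
    have h := hfunc S hSnn ((2:ℝ) ^ (-((m:ℝ)+1) * δ)) hr.le
    have h2 : (2:ℝ) ^ (-((m:ℝ)+1) * δ) * φ (S + (2:ℝ) ^ (-((m:ℝ)+1) * δ))
        ≤ C' * (C' ^ (-(1/δ)) * (2:ℝ) ^ (-((m:ℝ) + 1 + 1/δ))) ^ (1+δ) := by
      refine h.trans (mul_le_mul_of_nonneg_left
        (Real.rpow_le_rpow (hφ_nonneg _) ?_ (by positivity)) hC'.le)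
      have hee : -(m:ℝ) - 1 - 1/δ = -((m:ℝ) + 1 + 1/δ) := by ring
      rw [← hee]
      exact ih
    rw [key_id δ C' ((m:ℝ) + 1 + 1/δ) hδ hC'] at h2
    rw [hsum]
    rw [mul_comm, ← le_div_iff₀ hr] at h2
    refine h2.trans ?_
    rw [mul_div_assoc, ← Real.rpow_sub (by norm_num : (0:ℝ) < 2)]
    have he : -((m:ℝ) + 1 + 1/δ) * (1+δ) - (-((m:ℝ)+1) * δ)
        = -((m:ℝ)+1) - 1 - 1/δ := by field_simp; ring
    rw [he]
    push_cast
    exact le_rfl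
end

section
/- For every real number p > 0 there exists a constant C > 0, depending only on p, such that for every real number f ≥ 0 and every real number F one has f^p · e^F ≤ e^F · (1 + |F|)^p + C · e^{2f}. -/
open Real

lemma rpow_le_const_mul_exp (p : ℝ) (hp : 0 < p) (x : ℝ) (hx : 0 ≤ x) :
    x ^ p ≤ p ^ p * Real.exp x := by
  have h1 : x ≤ p * Real.exp (x / p) := by
    have h2 : x / p ≤ Real.exp (x / p) := le_trans (by linarith [div_nonneg hx hp.le])
      (Real.add_one_le_exp (x / p))
    calc x = p * (x / p) := by field_simp
    _ ≤ p * Real.exp (x / p) := by nlinarith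
  calc x ^ p ≤ (p * Real.exp (x / p)) ^ p :=
        Real.rpow_le_rpow hx h1 hp.le
    _ = p ^ p * (Real.exp (x / p)) ^ p :=
        Real.mul_rpow hp.le (Real.exp_nonneg _)
    _ = p ^ p * Real.exp x := by
        rw [← Real.exp_mul]
        congr 1
        field_simp

/-- The pointwise 'Fact' of Guo–Phong–Tong: for every `p > 0` there is `C > 0` depending
only on `p` such that `f ^ p * e ^ F ≤ e ^ F * (1 + |F|) ^ p + C * e ^ (2 * f)` for all
`f ≥ 0` and all real `F`. -/
theorem pointwise_fact (p : ℝ) (hp : 0 < p) :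
    ∃ C : ℝ, 0 < C ∧ ∀ f F : ℝ, 0 ≤ f →
      f ^ p * Real.exp F ≤ Real.exp F * (1 + |F|) ^ p + C * Real.exp (2 * f) := by
  refine ⟨p ^ p, Real.rpow_pos_of_pos hp p, fun f F hf => ?_⟩
  rcases le_or_gt f (1 + |F|) with h | h
  · have h1 : f ^ p ≤ (1 + |F|) ^ p := Real.rpow_le_rpow hf h hp.le
    have h2 : f ^ p * Real.exp F ≤ Real.exp F * (1 + |F|) ^ p := by
      rw [mul_comm (Real.exp F)]
      exact mul_le_mul_of_nonneg_right h1 (Real.exp_nonneg _)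
    have h3 : 0 ≤ p ^ p * Real.exp (2 * f) :=
      mul_nonneg (Real.rpow_pos_of_pos hp p).le (Real.exp_nonneg _)
    linarith
  · have hF : F ≤ f := le_trans (le_abs_self F) (by linarith)
    have h1 : f ^ p ≤ p ^ p * Real.exp f := rpow_le_const_mul_exp p hp f hf
    have h2 : f ^ p * Real.exp F ≤ (p ^ p * Real.exp f) * Real.exp f := by
      apply mul_le_mul h1 (Real.exp_le_exp.mpr hF) (Real.exp_nonneg _)
      exact mul_nonneg (Real.rpow_pos_of_pos hp p).le (Real.exp_nonneg _)
    have h3 : (p ^ p * Real.exp f) * Real.exp f = p ^ p * Real.exp (2 * f) := by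
      rw [mul_assoc, ← Real.exp_add]; ring_nf
    have h4 : 0 ≤ Real.exp F * (1 + |F|) ^ p :=
      mul_nonneg (Real.exp_nonneg _) (Real.rpow_nonneg (by positivity) _)
    linarith [h2.trans_eq h3]
end
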